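/- Let G be a Hamiltonian cubic graph on n = 3k vertices, k ≥ 2, with vertices labeled by Z/nZ along a Hamiltonian cycle. Then G has a good shift; consequently G has a proportionally dense subgraph of size ⌊(2n+1)/3⌋ = 2k. -/
import Mathlib


open SimpleGraph

/-- Number of neighbors of `v` inside `T`. -/
noncomputable def degIn {W : Type*} (G : SimpleGraph W) (T : Set W) (v : W) : ℕ :=
  (T ∩ G.neighborSet v).ncard

/-- `G[S]` is a proportionally dense subgraph. -/
def IsPDS {W : Type*} (G : SimpleGraph W) (S : Set W) : Prop :=
  S ⊂ Set.univ ∧ 2 ≤ S.ncard ∧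
    ∀ u ∈ S, degIn G Sᶜ u * (S.ncard - 1) ≤ degIn G S u * Sᶜ.ncard

/-- The set `{u, u+1, …, u+(m-1)}` of `m` consecutive vertices on the Hamiltonian
cycle `(0, 1, …, n-1)`. -/
def arc (n : ℕ) (u : ZMod n) (m : ℕ) : Set (ZMod n) :=
  (fun j : ℕ => u + (j : ZMod n)) '' {j : ℕ | j < m}

/-- `P = {u, u+1, …, u-k'-1}` (that is, `arc n u (n-k')`) is a *shift* with
parameter `k'` (where `2 ≤ k' ≤ n-2`) if both of its endpoints have exactly two
neighbors inside `P`. -/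
def IsShift (n : ℕ) (G : SimpleGraph (ZMod n)) (k' : ℕ) (u : ZMod n) : Prop :=
  2 ≤ k' ∧ k' ≤ n - 2 ∧
    degIn G (arc n u (n - k')) u = 2 ∧
    degIn G (arc n u (n - k')) (u + ((n - k' - 1 : ℕ) : ZMod n)) = 2

lemma mem_arc_iff {n : ℕ} [NeZero n] {u x : ZMod n} {m : ℕ} :
    x ∈ arc n u m ↔ (x - u).val < m := by
  constructor
  · rintro ⟨j, hj, rfl⟩
    rw [add_sub_cancel_left, ZMod.val_natCast]
    exact lt_of_le_of_lt (Nat.mod_le _ _) hj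
  · intro h
    exact ⟨(x - u).val, h, by
      show u + (((x - u).val : ℕ) : ZMod n) = x
      rw [ZMod.natCast_zmod_val]; ring⟩

lemma arc_ncard {n : ℕ} [NeZero n] (u : ZMod n) {m : ℕ} (hm : m ≤ n) :
    (arc n u m).ncard = m := by
  rw [arc, Set.ncard_image_of_injOn, show {j : ℕ | j < m} = ↑(Finset.range m) by
      ext j; simp, Set.ncard_coe_finset, Finset.card_range]
  intro a ha b hb hab
  simp only [Set.mem_setOf_eq] at ha hb
  have : ((a : ZMod n)) = b := by
    have := hab; simpa using this
  have := congrArg ZMod.val this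
  rwa [ZMod.val_natCast, ZMod.val_natCast, Nat.mod_eq_of_lt (lt_of_lt_of_le ha hm),
    Nat.mod_eq_of_lt (lt_of_lt_of_le hb hm)] at this

/-- Corollary (order `3k`): a Hamiltonian cubic graph on `n = 3k` vertices,
`k ≥ 2`, has a good shift, hence a PDS of size `⌊(2n+1)/3⌋ = 2k`.
(Here `⌈(n-1)/3⌉ = (n+1)/3` in natural number arithmetic.) -/
theorem good_shift_of_card_three_mul (n k : ℕ) (hk : 2 ≤ k) (hn : n = 3 * k)
    (G : SimpleGraph (ZMod n))
    (hcycle : ∀ i : ZMod n, G.Adj i (i + 1))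
    (hcubic : ∀ v : ZMod n, (G.neighborSet v).ncard = 3) :
    (∃ u : ZMod n, IsShift n G ((n + 1) / 3) u) ∧
      ∃ S : Set (ZMod n), IsPDS G S ∧ S.ncard = 2 * k := by
  subst hn
  haveI : NeZero (3 * k) := ⟨by omega⟩
  haveI : Fact (1 < 3 * k) := ⟨by omega⟩
  -- cycle adjacencies
  have hadj2 : ∀ i : ZMod (3 * k), G.Adj i (i - 1) := by
    intro i
    have := (hcycle (i - 1)).symm
    simpa using this
  have h2ne0 : (2 : ZMod (3 * k)) ≠ 0 := by
    intro h
    have h' : ((2 : ℕ) : ZMod (3 * k)) = 0 := by push_cast; exact h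
    rw [ZMod.natCast_eq_zero_iff] at h'
    have := Nat.le_of_dvd (by norm_num) h'
    omega
  have hne11 : ∀ i : ZMod (3 * k), i + 1 ≠ i - 1 := by
    intro i h
    exact h2ne0 (by linear_combination h)
  -- the chord function
  have hex : ∀ i : ZMod (3 * k), ∃ x, G.Adj i x ∧ x ≠ i + 1 ∧ x ≠ i - 1 := by
    intro i
    by_contra h
    push_neg at h
    have hsub : G.neighborSet i ⊆ {i + 1, i - 1} := by
      intro x hx
      rcases h x hx with h1
      by_cases hx1 : x = i + 1
      · exact Or.inl hx1
      · exact Or.inr (h1 hx1)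
    have hle := Set.ncard_le_ncard hsub (Set.toFinite _)
    have : ({i + 1, i - 1} : Set (ZMod (3 * k))).ncard ≤ 2 := by
      apply le_trans (Set.ncard_insert_le _ _)
      simp
    rw [hcubic i] at hle
    omega
  choose c hcadj hcne1 hcne2 using hex
  have hcnei : ∀ i, c i ≠ i := by
    intro i h
    have := hcadj i
    rw [h] at this
    exact G.irrefl this
  have hNset : ∀ i, G.neighborSet i = {i + 1, i - 1, c i} := by
    intro i
    have hsub : ({i + 1, i - 1, c i} : Set (ZMod (3 * k))) ⊆ G.neighborSet i := by
      rintro x (rfl | rfl | rfl)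
      · exact hcycle i
      · exact hadj2 i
      · exact hcadj i
    have hcard : ({i + 1, i - 1, c i} : Set (ZMod (3 * k))).ncard = 3 := by
      rw [Set.ncard_insert_of_notMem (by
        rintro (h | h)
        · exact hne11 i h
        · exact (hcne1 i) h.symm), Set.ncard_pair (fun h => (hcne2 i) h.symm)]
    exact (Set.eq_of_subset_of_ncard_le hsub (by rw [hcard, hcubic i]) (Set.toFinite _)).symm
  have hcc : ∀ i, c (c i) = i := by
    intro i
    have h1 : i ∈ G.neighborSet (c i) := (hcadj i).symm
    rw [hNset (c i)] at h1
    rcases h1 with h | h | h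
    · exact absurd (eq_sub_of_add_eq h.symm) (hcne2 i)
    · exact absurd (eq_add_of_sub_eq h.symm) (hcne1 i)
    · exact h.symm
  -- chord distance facts
  have hval : ∀ (u : ZMod (3*k)) (j : ℕ), j < 3*k → ((u + (j:ℕ)) - u).val = j := by
    intro u j hj
    rw [add_sub_cancel_left, ZMod.val_natCast, Nat.mod_eq_of_lt hj]
  have hDlb : ∀ i, 2 ≤ (c i - i).val := by
    intro i
    have h0 : (c i - i).val ≠ 0 := by
      rw [Ne, ZMod.val_eq_zero, sub_eq_zero]
      exact fun h => hcnei i h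
    have h1 : (c i - i).val ≠ 1 := by
      intro h
      apply hcne1 i
      have h2 : c i - i = 1 := by
        have h3 := congrArg (fun t : ℕ => (t : ZMod (3*k))) h
        simpa [ZMod.natCast_zmod_val] using h3
      linear_combination h2
    omega
  have hDub : ∀ i, (c i - i).val ≤ 3*k - 2 := by
    intro i
    have hlt := ZMod.val_lt (c i - i)
    have h1 : (c i - i).val ≠ 3*k - 1 := by
      intro h
      apply hcne2 i
      have h2 : c i - i = ((3*k-1 : ℕ) : ZMod (3*k)) := by
        have h3 := congrArg (fun t : ℕ => (t : ZMod (3*k))) h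
        simpa [ZMod.natCast_zmod_val] using h3
      have h3 : ((3*k-1 : ℕ) : ZMod (3*k)) = -1 := by
        rw [Nat.cast_sub (by omega), ZMod.natCast_self]
        ring
      rw [h3] at h2
      linear_combination h2
    omega
  have hDneg : ∀ i, (c (c i) - c i).val = 3*k - (c i - i).val := by
    intro i
    have h0 : c i - i ≠ 0 := sub_ne_zero_of_ne (hcnei i)
    haveI : NeZero (c i - i) := ⟨h0⟩
    have h1 : c (c i) - c i = -(c i - i) := by rw [hcc i]; ring
    rw [h1, ZMod.val_neg_of_ne_zero]
  have hmem : ∀ (u : ZMod (3*k)) (j : ℕ), j < 3*k →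
      (u + (j:ℕ) ∈ arc (3*k) u (2*k) ↔ j < 2*k) := by
    intro u j hj
    rw [mem_arc_iff, hval u j hj]
  -- generic endpoint degree lemma
  have hdeg2 : ∀ (S : Set (ZMod (3*k))) (v : ZMod (3*k)), (v + 1 ∈ S ↔ v - 1 ∉ S) →
      (degIn G S v = 2 ↔ c v ∈ S) := by
    intro S v hiff
    rw [degIn, hNset]
    by_cases h1 : v + 1 ∈ S
    · have h2 : v - 1 ∉ S := hiff.1 h1
      by_cases hc : c v ∈ S
      · have hset : S ∩ {v+1, v-1, c v} = {v+1, c v} := by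
          ext x
          simp only [Set.mem_inter_iff, Set.mem_insert_iff, Set.mem_singleton_iff]
          constructor
          · rintro ⟨hxS, rfl | rfl | rfl⟩ <;> tauto
          · rintro (rfl | rfl)
            · exact ⟨h1, Or.inl rfl⟩
            · exact ⟨hc, Or.inr (Or.inr rfl)⟩
        rw [hset, Set.ncard_pair (fun h => hcne1 v h.symm)]
        simp [hc]
      · have hset : S ∩ {v+1, v-1, c v} = {v+1} := by
          ext x
          simp only [Set.mem_inter_iff, Set.mem_insert_iff, Set.mem_singleton_iff]
          constructor
          · rintro ⟨hxS, rfl | rfl | rfl⟩ <;> tauto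
          · rintro rfl; exact ⟨h1, Or.inl rfl⟩
        rw [hset, Set.ncard_singleton]
        simp [hc]
    · have h2 : v - 1 ∈ S := by
        by_contra h
        exact h1 (hiff.2 h)
      by_cases hc : c v ∈ S
      · have hset : S ∩ {v+1, v-1, c v} = {v-1, c v} := by
          ext x
          simp only [Set.mem_inter_iff, Set.mem_insert_iff, Set.mem_singleton_iff]
          constructor
          · rintro ⟨hxS, rfl | rfl | rfl⟩ <;> tauto
          · rintro (rfl | rfl)
            · exact ⟨h2, Or.inr (Or.inl rfl)⟩
            · exact ⟨hc, Or.inr (Or.inr rfl)⟩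
        rw [hset, Set.ncard_pair (fun h => hcne2 v h.symm)]
        simp [hc]
      · have hset : S ∩ {v+1, v-1, c v} = {v-1} := by
          ext x
          simp only [Set.mem_inter_iff, Set.mem_insert_iff, Set.mem_singleton_iff]
          constructor
          · rintro ⟨hxS, rfl | rfl | rfl⟩ <;> tauto
          · rintro rfl; exact ⟨h2, Or.inr (Or.inl rfl)⟩
        rw [hset, Set.ncard_singleton]
        simp [hc]
  have hdegL : ∀ u : ZMod (3*k), degIn G (arc (3*k) u (2*k)) u = 2 ↔ (c u - u).val < 2*k := by
    intro u
    have hu1 : u + 1 ∈ arc (3*k) u (2*k) := by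
      have h := (hmem u 1 (by omega)).2 (by omega)
      simpa using h
    have hu2 : u - 1 ∉ arc (3*k) u (2*k) := by
      intro h
      rw [mem_arc_iff] at h
      have heq : (u - 1 - u) = ((3*k-1:ℕ) : ZMod (3*k)) := by
        rw [Nat.cast_sub (by omega), ZMod.natCast_self]
        ring
      rw [heq, ZMod.val_natCast, Nat.mod_eq_of_lt (by omega)] at h
      omega
    rw [hdeg2 _ u ⟨fun _ => hu2, fun _ => hu1⟩, mem_arc_iff]
  have hdegR : ∀ u : ZMod (3*k), degIn G (arc (3*k) u (2*k)) (u + ((2*k-1:ℕ) : ZMod (3*k))) = 2 ↔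
      k < (c (u + ((2*k-1:ℕ) : ZMod (3*k))) - (u + ((2*k-1:ℕ) : ZMod (3*k)))).val := by
    intro u
    set v := u + ((2*k-1:ℕ) : ZMod (3*k)) with hv
    have hv1 : v - 1 ∈ arc (3*k) u (2*k) := by
      have heq : v - 1 = u + ((2*k-2 : ℕ) : ZMod (3*k)) := by
        rw [hv, show (2*k-1 : ℕ) = (2*k-2)+1 from by omega]
        push_cast
        ring
      rw [heq]
      exact (hmem u (2*k-2) (by omega)).2 (by omega)
    have hv2 : v + 1 ∉ arc (3*k) u (2*k) := by
      have heq : v + 1 = u + ((2*k : ℕ) : ZMod (3*k)) := by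
        rw [hv, show (2*k : ℕ) = (2*k-1)+1 from by omega]
        push_cast
        ring
      rw [heq]
      intro h
      have := (hmem u (2*k) (by omega)).1 h
      omega
    rw [hdeg2 _ v ⟨fun h => absurd h hv2, fun h => absurd hv1 h⟩, mem_arc_iff]
    have hd1 := hDlb v
    have hd2 := hDub v
    have hsplit : c v - u = (((c v - v).val + (2*k-1) : ℕ) : ZMod (3*k)) := by
      have h1 : (((c v - v).val : ℕ) : ZMod (3*k)) = c v - v := ZMod.natCast_zmod_val _
      rw [Nat.cast_add, h1]
      linear_combination hv
    rw [hsplit, ZMod.val_natCast]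
    rcases le_or_gt (c v - v).val k with h | h
    · rw [Nat.mod_eq_of_lt (by omega)]
      constructor <;> intro <;> omega
    · rw [show (c v - v).val + (2*k-1) = 3*k + ((c v - v).val - (k+1)) from by omega,
        Nat.add_mod_left, Nat.mod_eq_of_lt (by omega)]
      constructor <;> intro <;> omega
  -- invariance machinery
  have key : ∃ u : ZMod (3*k), (c u - u).val < 2*k ∧
      k < (c (u + ((2*k-1:ℕ) : ZMod (3*k))) - (u + ((2*k-1:ℕ) : ZMod (3*k)))).val := by
    by_contra hcon
    push_neg at hcon
    set t : ZMod (3*k) := ((2*k-1:ℕ) : ZMod (3*k)) with ht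
    have hstep : ∀ u : ZMod (3*k), (c u - u).val < 2*k → (c (u+t) - (u+t)).val < 2*k :=
      fun u hu => lt_of_le_of_lt (hcon u hu) (by omega)
    have ht3 : t + t + t = -3 := by
      have h1 : ((6*k - 3 : ℕ) : ZMod (3*k)) = t + t + t := by
        rw [ht, show (6*k-3 : ℕ) = (2*k-1) + ((2*k-1) + (2*k-1)) from by omega]
        push_cast
        ring
      have h2 : ((6*k - 3 : ℕ) : ZMod (3*k)) = -3 := by
        rw [Nat.cast_sub (by omega), show ((6*k:ℕ) : ZMod (3*k)) = 0 from by
          rw [show (6*k:ℕ) = 2*(3*k) from by ring, Nat.cast_mul, ZMod.natCast_self, mul_zero]]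
        push_cast
        ring
      rw [← h1, h2]
    have hshift : ∀ u : ZMod (3*k), u + t + t + t = u - 3 := by
      intro u
      linear_combination ht3
    have hQstep : ∀ u : ZMod (3*k), (c u - u).val < 2*k → (c (u-3) - (u-3)).val ≤ k := by
      intro u hu
      have h1 := hstep u hu
      have h2 := hstep _ h1
      have h3 := hcon _ h2
      rwa [hshift u] at h3
    have hPstep : ∀ u : ZMod (3*k), (c u - u).val < 2*k → (c (u-3) - (u-3)).val < 2*k :=
      fun u hu => lt_of_le_of_lt (hQstep u hu) (by omega)
    have hiter : ∀ (m : ℕ) (u : ZMod (3*k)), (c u - u).val < 2*k →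
        (c (u - 3*((m:ℕ) : ZMod (3*k))) - (u - 3*((m:ℕ) : ZMod (3*k)))).val < 2*k := by
      intro m
      induction m with
      | zero => intro u hu; simpa using hu
      | succ m ih =>
        intro u hu
        have h1 := hPstep _ (ih u hu)
        have heq : u - 3*((m:ℕ) : ZMod (3*k)) - 3 = u - 3*(((m+1:ℕ)) : ZMod (3*k)) := by
          push_cast
          ring
        rwa [heq] at h1
    have hzero : (3 : ZMod (3*k)) * (((k-1:ℕ)) : ZMod (3*k)) + 3 = 0 := by
      have h3 : ((3*(k-1)+3 : ℕ) : ZMod (3*k)) = 0 := by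
        rw [show 3*(k-1)+3 = 3*k from by omega]
        exact ZMod.natCast_self _
      rw [Nat.cast_add, Nat.cast_mul] at h3
      simpa using h3
    have hPQ : ∀ u : ZMod (3*k), (c u - u).val < 2*k → (c u - u).val ≤ k := by
      intro u hu
      have h1 := hiter (k-1) u hu
      have h2 := hQstep _ h1
      rwa [show u - 3*(((k-1:ℕ)) : ZMod (3*k)) - 3 = u from by linear_combination -hzero] at h2
    have hP3fwd : ∀ u : ZMod (3*k), (c u - u).val < 2*k → (c (u+3) - (u+3)).val < 2*k := by
      intro u hu
      have h1 := hiter (k-1) u hu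
      rwa [show u - 3*(((k-1:ℕ)) : ZMod (3*k)) = u + 3 from by linear_combination -hzero] at h1
    have hP3bwd : ∀ u : ZMod (3*k), (c (u+3) - (u+3)).val < 2*k → (c u - u).val < 2*k := by
      intro u hu
      have h1 := hPstep _ hu
      rwa [show u + 3 - 3 = u from by ring] at h1
    have hP3m : ∀ (m : ℕ) (w : ZMod (3*k)), (c w - w).val < 2*k →
        (c (w + 3*((m:ℕ) : ZMod (3*k))) - (w + 3*((m:ℕ) : ZMod (3*k)))).val < 2*k := by
      intro m
      induction m with
      | zero => intro w hw; simpa using hw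
      | succ m ih =>
        intro w hw
        have h1 := hP3fwd _ (ih w hw)
        rwa [show w + 3*((m:ℕ) : ZMod (3*k)) + 3 = w + 3*(((m+1:ℕ)) : ZMod (3*k)) from by
          push_cast; ring] at h1
    have hP3mbwd : ∀ (m : ℕ) (w : ZMod (3*k)),
        (c (w + 3*((m:ℕ) : ZMod (3*k))) - (w + 3*((m:ℕ) : ZMod (3*k)))).val < 2*k →
        (c w - w).val < 2*k := by
      intro m
      induction m with
      | zero => intro w hw; simpa using hw
      | succ m ih =>
        intro w hw
        apply ih
        apply hP3bwd
        rwa [show w + 3*((m:ℕ) : ZMod (3*k)) + 3 = w + 3*(((m+1:ℕ)) : ZMod (3*k)) from by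
          push_cast; ring]
    have hrep : ∀ w : ZMod (3*k),
        w = ((w.val % 3 : ℕ) : ZMod (3*k)) + 3*(((w.val / 3 : ℕ)) : ZMod (3*k)) := by
      intro w
      calc w = ((w.val : ℕ) : ZMod (3*k)) := (ZMod.natCast_zmod_val w).symm
        _ = ((w.val % 3 + 3*(w.val / 3) : ℕ) : ZMod (3*k)) :=
            congrArg _ (Nat.mod_add_div _ _).symm
        _ = ((w.val % 3 : ℕ) : ZMod (3*k)) + 3*(((w.val / 3 : ℕ)) : ZMod (3*k)) := by
            push_cast; ring
    have hmodP : ∀ u w : ZMod (3*k), u.val % 3 = w.val % 3 →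
        (c u - u).val < 2*k → (c w - w).val < 2*k := by
      intro u w hmd hu
      have hbu : (c ((u.val % 3 : ℕ) : ZMod (3*k)) - ((u.val % 3 : ℕ) : ZMod (3*k))).val < 2*k := by
        apply hP3mbwd (u.val / 3)
        rwa [← hrep u]
      rw [hmd] at hbu
      have h2 := hP3m (w.val / 3) _ hbu
      rwa [← hrep w] at h2
    -- counting
    have hPiffnot : ∀ u : ZMod (3*k),
        (c u - u).val < 2*k ↔ ¬ ((c (c u) - c u).val < 2*k) := by
      intro u
      constructor
      · intro hu hcu
        have h2 := hPQ (c u) hcu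
        rw [hDneg u] at h2
        have h3 := hDub u
        have h4 := hPQ u hu
        omega
      · intro hncu
        rw [hDneg u] at hncu
        have := hDlb u
        have := hDub u
        omega
    have hFc : (Finset.univ.filter (fun u : ZMod (3*k) => (c u - u).val < 2*k)).card =
        (Finset.univ.filter (fun u : ZMod (3*k) => ¬ ((c u - u).val < 2*k))).card := by
      apply Finset.card_bij' (i := fun a _ => c a) (j := fun b _ => c b)
      · intro a ha
        simp only [Finset.mem_filter, Finset.mem_univ, true_and] at ha ⊢
        exact (hPiffnot a).1 ha
      · intro b hb
        simp only [Finset.mem_filter, Finset.mem_univ, true_and] at hb ⊢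
        by_contra hgoal
        exact hb ((hPiffnot b).mpr hgoal)
      · intro a _
        exact hcc a
      · intro b _
        exact hcc b
    have htot : (Finset.univ.filter (fun u : ZMod (3*k) => (c u - u).val < 2*k)).card +
        (Finset.univ.filter (fun u : ZMod (3*k) => ¬ ((c u - u).val < 2*k))).card = 3*k := by
      rw [Finset.card_filter_add_card_filter_not, Finset.card_univ, ZMod.card]
    have hFr : ∀ r : ℕ, r < 3 →
        (Finset.univ.filter (fun u : ZMod (3*k) => u.val % 3 = r)).card = k := by
      intro r hr
      have hbij : (Finset.univ.filter (fun u : ZMod (3*k) => u.val % 3 = r)).card =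
          (Finset.univ : Finset (Fin k)).card := by
        apply Finset.card_bij' (i := fun (u : ZMod (3*k)) _ => (⟨u.val / 3, by
          have := ZMod.val_lt u; omega⟩ : Fin k))
          (j := fun (j : Fin k) _ => ((3*(j:ℕ) + r : ℕ) : ZMod (3*k)))
        · intro a _
          exact Finset.mem_univ _
        · intro a ha
          simp only [Finset.mem_filter, Finset.mem_univ, true_and] at ha
          conv_rhs => rw [← ZMod.natCast_zmod_val a]
          congr 1
          show 3 * (a.val / 3) + r = a.val
          omega
        · intro b _
          apply Fin.val_injective
          show (((3*(b:ℕ)+r : ℕ) : ZMod (3*k)).val)/3 = (b:ℕ)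
          rw [ZMod.val_natCast, Nat.mod_eq_of_lt (show 3*(b:ℕ) + r < 3*k from by
            have := b.isLt; omega)]
          omega
        · intro b _
          refine Finset.mem_filter.mpr ⟨Finset.mem_univ _, ?_⟩
          rw [ZMod.val_natCast, Nat.mod_eq_of_lt (show 3*(b:ℕ) + r < 3*k from by
            have := b.isLt; omega)]
          omega
      rw [hbij, Finset.card_univ, Fintype.card_fin]
    have hdich : ∀ r : ℕ, r < 3 →
        ((Finset.univ.filter (fun u : ZMod (3*k) => (c u - u).val < 2*k)).filter
          (fun u => u.val % 3 = r)).card = 0 ∨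
        ((Finset.univ.filter (fun u : ZMod (3*k) => (c u - u).val < 2*k)).filter
          (fun u => u.val % 3 = r)).card = k := by
      intro r hr
      have hrval : (((r:ℕ) : ZMod (3*k)).val) % 3 = r := by
        rw [ZMod.val_natCast, Nat.mod_eq_of_lt (show r < 3*k from by omega),
          Nat.mod_eq_of_lt hr]
      by_cases hP : (c ((r:ℕ) : ZMod (3*k)) - ((r:ℕ) : ZMod (3*k))).val < 2*k
      · right
        rw [show (Finset.univ.filter (fun u : ZMod (3*k) => (c u - u).val < 2*k)).filter
            (fun u => u.val % 3 = r) =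
            Finset.univ.filter (fun u : ZMod (3*k) => u.val % 3 = r) from ?_, hFr r hr]
        ext u
        simp only [Finset.mem_filter, Finset.mem_univ, true_and]
        constructor
        · intro h
          exact h.2
        · intro h
          refine ⟨?_, h⟩
          exact hmodP _ u (by rw [hrval, h]) hP
      · left
        rw [Finset.card_eq_zero, Finset.eq_empty_iff_forall_notMem]
        intro u hu
        simp only [Finset.mem_filter, Finset.mem_univ, true_and] at hu
        exact hP (hmodP u _ (by rw [hrval, hu.2]) hu.1)
    have hsum : (Finset.univ.filter (fun u : ZMod (3*k) => (c u - u).val < 2*k)).card =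
        ((Finset.univ.filter (fun u : ZMod (3*k) => (c u - u).val < 2*k)).filter
          (fun u => u.val % 3 = 0)).card +
        ((Finset.univ.filter (fun u : ZMod (3*k) => (c u - u).val < 2*k)).filter
          (fun u => u.val % 3 = 1)).card +
        ((Finset.univ.filter (fun u : ZMod (3*k) => (c u - u).val < 2*k)).filter
          (fun u => u.val % 3 = 2)).card := by
      rw [Finset.card_eq_sum_ones, Finset.card_filter, Finset.card_filter, Finset.card_filter,
        ← Finset.sum_add_distrib, ← Finset.sum_add_distrib]
      apply Finset.sum_congr rfl
      intro u _
      have : u.val % 3 < 3 := Nat.mod_lt _ (by norm_num)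
      split_ifs <;> omega
    have h0 := hdich 0 (by norm_num)
    have h1 := hdich 1 (by norm_num)
    have h2 := hdich 2 (by norm_num)
    omega
  obtain ⟨u, hu1, hu2⟩ := key
  have hdL := (hdegL u).mpr hu1
  have hdR := (hdegR u).mpr hu2
  constructor
  · refine ⟨u, by omega, by omega, ?_, ?_⟩
    · rw [show 3*k - (3*k+1)/3 = 2*k from by omega]
      exact hdL
    · rw [show 3*k - (3*k+1)/3 = 2*k from by omega]
      exact hdR
  · refine ⟨arc (3*k) u (2*k), ⟨?_, ?_, ?_⟩, arc_ncard u (by omega)⟩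
    · rw [Set.ssubset_univ_iff]
      intro h
      have hmem2k : u + ((2*k:ℕ) : ZMod (3*k)) ∈ arc (3*k) u (2*k) := by
        rw [h]
        trivial
      have := (hmem u (2*k) (by omega)).1 hmem2k
      omega
    · rw [arc_ncard u (by omega)]
      omega
    · intro v hv
      rw [arc_ncard u (by omega)]
      have hcompl : (arc (3*k) u (2*k))ᶜ.ncard = k := by
        have h1 := Set.ncard_add_ncard_compl (arc (3*k) u (2*k))
        rw [arc_ncard u (by omega), Nat.card_eq_fintype_card, ZMod.card] at h1
        omega
      rw [hcompl]
      have hsum3 : degIn G (arc (3*k) u (2*k)) v + degIn G (arc (3*k) u (2*k))ᶜ v = 3 := by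
        have hun : (arc (3*k) u (2*k) ∩ G.neighborSet v) ∪
            ((arc (3*k) u (2*k))ᶜ ∩ G.neighborSet v) = G.neighborSet v := by
          rw [← Set.union_inter_distrib_right, Set.union_compl_self, Set.univ_inter]
        have h2 := Set.ncard_union_eq
          (Set.disjoint_left.mpr (fun x hx hy => hy.1 hx.1) :
            Disjoint (arc (3*k) u (2*k) ∩ G.neighborSet v)
              ((arc (3*k) u (2*k))ᶜ ∩ G.neighborSet v))
          (Set.toFinite _) (Set.toFinite _)
        rw [hun, hcubic v] at h2
        exact h2.symm
      have h2le : 2 ≤ degIn G (arc (3*k) u (2*k)) v := by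
        rcases hv with ⟨j, hj, hveq⟩
        simp only [Set.mem_setOf_eq] at hj
        have hveq' : u + (j : ZMod (3*k)) = v := hveq
        subst hveq'
        rcases Nat.eq_zero_or_pos j with rfl | hj0
        · rw [show u + ((0:ℕ) : ZMod (3*k)) = u from by push_cast; ring]
          omega
        · by_cases hj1 : j = 2*k-1
          · subst hj1
            omega
          · have hin1 : u + (j : ZMod (3*k)) + 1 ∈ arc (3*k) u (2*k) := by
              rw [show u + (j : ZMod (3*k)) + 1 = u + ((j+1:ℕ) : ZMod (3*k)) from by
                push_cast; ring]
              exact (hmem u (j+1) (by omega)).2 (by omega)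
            have hin2 : u + (j : ZMod (3*k)) - 1 ∈ arc (3*k) u (2*k) := by
              rw [show u + (j : ZMod (3*k)) - 1 = u + ((j-1:ℕ) : ZMod (3*k)) from by
                rw [Nat.cast_sub (by omega)]
                push_cast
                ring]
              exact (hmem u (j-1) (by omega)).2 (by omega)
            have hsub : ({u + (j : ZMod (3*k)) + 1, u + (j : ZMod (3*k)) - 1} :
                Set (ZMod (3*k))) ⊆
                arc (3*k) u (2*k) ∩ G.neighborSet (u + (j : ZMod (3*k))) := by
              rintro x (rfl | rfl)
              · exact ⟨hin1, hcycle _⟩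
              · exact ⟨hin2, hadj2 _⟩
            have hle := Set.ncard_le_ncard hsub (Set.toFinite _)
            rw [Set.ncard_pair (hne11 _)] at hle
            exact hle
      have hb1 : degIn G (arc (3*k) u (2*k))ᶜ v ≤ 1 := by omega
      calc degIn G (arc (3*k) u (2*k))ᶜ v * (2*k - 1) ≤ 1 * (2*k - 1) :=
            Nat.mul_le_mul_right _ hb1
        _ ≤ 2 * k := by omega
        _ ≤ degIn G (arc (3*k) u (2*k)) v * k := Nat.mul_le_mul_right _ h2le
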